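/- Let G be a finite simple graph with vertex set {x_1,...,x_n} and let k ≥ 1 be an integer. Set W = {x_{i, ⌊(k+1)/2⌋ + 1} : 1 ≤ i ≤ n} ⊆ V(G_{k+1}). Then the map φ: V(G_k) → V(G_{k+1} \ W) defined by φ(x_{i,j}) = x_{i,j} if 1 ≤ j ≤ ⌊(k+1)/2⌋ and φ(x_{i,j}) = x_{i,j+1} if j ≥ ⌊(k+1)/2⌋ + 1 is a graph isomorphism between G_k and the induced subgraph of G_{k+1} on V(G_{k+1}) \ W; in particular, G_k is isomorphic to an induced subgraph of G_{k+1}. -/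

import Mathlib

/-- The graph `G_k`: its vertices are the pairs `x_{i,p}` with `1 ≤ i ≤ n` and
`1 ≤ p ≤ k` (encoded zero-based as `Fin n × Fin k`), and `x_{i,p}` is adjacent
to `x_{j,q}` iff `{x_i,x_j} ∈ E(G)` and `p + q ≤ k + 1` (for the one-based
values of `p` and `q`). -/
def graphPower {n : ℕ} (G : SimpleGraph (Fin n)) (k : ℕ) :
    SimpleGraph (Fin n × Fin k) where
  Adj a b := G.Adj a.1 b.1 ∧ (a.2.val + 1) + (b.2.val + 1) ≤ k + 1
  symm := by
    constructor
    intro a b hab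
    exact ⟨hab.1.symm, by omega⟩
  loopless := by
    constructor
    intro a ha
    exact G.loopless.irrefl a.1 ha.1

/-- Let `G` be a graph with vertex set `{x_1,…,x_n}` and
`k ≥ 1`. Let `W = {x_{i,⌊(k+1)/2⌋+1} : 1 ≤ i ≤ n} ⊆ V(G_{k+1})` (zero-based:
the vertices whose second coordinate is `⌊(k+1)/2⌋`). The map
`φ : V(G_k) → V(G_{k+1})` sending `x_{i,j}` to `x_{i,j}` for `j ≤ ⌊(k+1)/2⌋`
and to `x_{i,j+1}` for `j ≥ ⌊(k+1)/2⌋ + 1` is injective with range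
`V(G_{k+1}) \ W`, and preserves and reflects adjacency; that is, `φ` is a graph
isomorphism from `G_k` onto the induced subgraph of `G_{k+1}` on
`V(G_{k+1}) \ W`. In particular `G_k` is isomorphic to an induced subgraph of
`G_{k+1}`. -/
theorem graphPower_induced_subgraph (n k : ℕ) (hk : 1 ≤ k) (G : SimpleGraph (Fin n)) :
    Function.Injective
      (fun v : Fin n × Fin k =>
        ((v.1, if v.2.val + 1 ≤ (k + 1) / 2 then (⟨v.2.val, by omega⟩ : Fin (k + 1))
          else ⟨v.2.val + 1, by omega⟩) : Fin n × Fin (k + 1))) ∧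
    Set.range
      (fun v : Fin n × Fin k =>
        ((v.1, if v.2.val + 1 ≤ (k + 1) / 2 then (⟨v.2.val, by omega⟩ : Fin (k + 1))
          else ⟨v.2.val + 1, by omega⟩) : Fin n × Fin (k + 1))) =
      {w : Fin n × Fin (k + 1) | w.2.val ≠ (k + 1) / 2} ∧
    ∀ v w : Fin n × Fin k,
      (graphPower G k).Adj v w ↔
        (graphPower G (k + 1)).Adj
          (v.1, if v.2.val + 1 ≤ (k + 1) / 2 then (⟨v.2.val, by omega⟩ : Fin (k + 1))
            else ⟨v.2.val + 1, by omega⟩)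
          (w.1, if w.2.val + 1 ≤ (k + 1) / 2 then (⟨w.2.val, by omega⟩ : Fin (k + 1))
            else ⟨w.2.val + 1, by omega⟩) := by
  refine ⟨?_, ?_, ?_⟩
  · intro a b h
    simp only [Prod.mk.injEq] at h
    split_ifs at h with ha hb hb <;>
      simp only [Fin.mk.injEq] at h <;>
      exact Prod.ext h.1 (Fin.ext (by omega))
  · ext w
    simp only [Set.mem_range, Set.mem_setOf_eq]
    constructor
    · rintro ⟨v, rfl⟩
      split_ifs with h <;> simp only [ne_eq, Fin.val_mk] <;> omega
    · intro hw
      by_cases h : w.2.val < (k + 1) / 2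
      · refine ⟨(w.1, ⟨w.2.val, by omega⟩), ?_⟩
        refine Prod.ext rfl ?_
        dsimp only
        rw [if_pos (by omega)]
      · have h2 : w.2.val > (k + 1) / 2 := by omega
        have hm : 1 ≤ (k + 1) / 2 := by omega
        refine ⟨(w.1, ⟨w.2.val - 1, by omega⟩), ?_⟩
        refine Prod.ext rfl ?_
        dsimp only
        rw [if_neg (by omega)]
        exact Fin.ext (show w.2.val - 1 + 1 = w.2.val by omega)
  · intro v w
    simp only [graphPower]
    constructor
    · rintro ⟨h1, h2⟩
      refine ⟨h1, ?_⟩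
      split_ifs <;> simp only [Fin.val_mk] <;> omega
    · rintro ⟨h1, h2⟩
      refine ⟨h1, ?_⟩
      split_ifs at h2 <;> simp only [Fin.val_mk] at h2 <;> omega
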